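/- Let n ≥ 1 be an integer, k ≥ 0 a real number, and λ = k(k+n−1). Let L be the linear operator acting on smooth functions on (0,∞) × ℝ (coordinates (r,z)) by L f = −∂²f/∂z² − ∂²f/∂r² − (n/r)·∂f/∂r + (λ/r²)·f, and for each integer j ≥ 0 let P_{k,j} be the real vector space of functions of the form (r,z) ↦ Σ_{l=0}^{⌊j/2⌋} a_l · r^{k+2l} · z^{j−2l} with a_l ∈ ℝ. Then: (i) for j ≥ 2, L maps P_{k,j} into P_{k,j−2}; (ii) for every j ≥ 0, the space H_{k,j} := P_{k,j} ∩ ker(L) is one-dimensional; (iii) for j ≥ 2, P_{k,j} is the direct sum of H_{k,j} and the space {(r,z) ↦ (r²+z²)·p(r,z) : p ∈ P_{k,j−2}}. -/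

import Mathlib

open Real Finset

/-- The function `(r,z) ↦ Σ_{l=0}^{⌊j/2⌋} a_l r^{k+2l} z^{j-2l}`
(coordinates `(r,z)`, `r^{k+2l}` is the real power). -/
noncomputable def polyFun (k : ℝ) (j : ℕ) (a : ℕ → ℝ) : ℝ → ℝ → ℝ :=
  fun r z => ∑ l ∈ Finset.range (j / 2 + 1),
    a l * r ^ (k + 2 * (l : ℝ)) * z ^ (j - 2 * l)

/-- The space `P_{k,j}` of functions of the form
`(r,z) ↦ Σ_{l=0}^{⌊j/2⌋} a_l r^{k+2l} z^{j-2l}`. -/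
def Pspace (k : ℝ) (j : ℕ) : Set (ℝ → ℝ → ℝ) :=
  { f | ∃ a : ℕ → ℝ, f = polyFun k j a }

/-- Partial derivative in the variable `z`. -/
noncomputable def pdz (f : ℝ → ℝ → ℝ) (r z : ℝ) : ℝ := deriv (fun z' => f r z') z

/-- Partial derivative in the variable `r`. -/
noncomputable def pdr (f : ℝ → ℝ → ℝ) (r z : ℝ) : ℝ := deriv (fun r' => f r' z) r

/-- The operator `L f = -∂²f/∂z² - ∂²f/∂r² - (n/r)∂f/∂r + (λ/r²)f`. -/
noncomputable def Lop (n : ℕ) (lam : ℝ) (f : ℝ → ℝ → ℝ) : ℝ → ℝ → ℝ :=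
  fun r z => -pdz (pdz f) r z - pdr (pdr f) r z - ((n : ℝ) / r) * pdr f r z
    + lam / r ^ 2 * f r z

lemma pdz_polyFun (k : ℝ) (j : ℕ) (a : ℕ → ℝ) (r z : ℝ) :
    pdz (polyFun k j a) r z
      = ∑ l ∈ range (j/2+1),
          a l * r ^ (k + 2 * (l:ℝ)) * (((j - 2*l : ℕ):ℝ) * z ^ (j - 2*l - 1)) := by
  have H : HasDerivAt (fun z' : ℝ => ∑ l ∈ range (j/2+1),
      a l * r ^ (k + 2 * (l:ℝ)) * z' ^ (j - 2*l))
      (∑ l ∈ range (j/2+1),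
        a l * r ^ (k + 2 * (l:ℝ)) * (((j - 2*l : ℕ):ℝ) * z ^ (j - 2*l - 1))) z := by
    apply HasDerivAt.fun_sum
    intro l _
    exact (hasDerivAt_pow (j - 2*l) z).const_mul _
  exact H.deriv

lemma pdz2_polyFun (k : ℝ) (j : ℕ) (a : ℕ → ℝ) (r z : ℝ) :
    pdz (pdz (polyFun k j a)) r z
      = ∑ l ∈ range (j/2+1),
          a l * r ^ (k + 2 * (l:ℝ)) *
            (((j - 2*l : ℕ):ℝ) * (((j - 2*l - 1 : ℕ):ℝ) * z ^ (j - 2*l - 1 - 1))) := by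
  have h1 : (fun z' : ℝ => pdz (polyFun k j a) r z')
      = fun z' : ℝ => ∑ l ∈ range (j/2+1),
          a l * r ^ (k + 2 * (l:ℝ)) * (((j - 2*l : ℕ):ℝ) * z' ^ (j - 2*l - 1)) :=
    funext fun z' => pdz_polyFun k j a r z'
  show deriv (fun z' => pdz (polyFun k j a) r z') z = _
  rw [h1]
  have H : HasDerivAt (fun z' : ℝ => ∑ l ∈ range (j/2+1),
      a l * r ^ (k + 2 * (l:ℝ)) * (((j - 2*l : ℕ):ℝ) * z' ^ (j - 2*l - 1)))
      (∑ l ∈ range (j/2+1),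
        a l * r ^ (k + 2 * (l:ℝ)) *
          (((j - 2*l : ℕ):ℝ) * (((j - 2*l - 1 : ℕ):ℝ) * z ^ (j - 2*l - 1 - 1)))) z := by
    apply HasDerivAt.fun_sum
    intro l _
    exact ((hasDerivAt_pow (j - 2*l - 1) z).const_mul _).const_mul _
  exact H.deriv

lemma pdr_polyFun (k : ℝ) (j : ℕ) (a : ℕ → ℝ) (r z : ℝ) (hr : 0 < r) :
    pdr (polyFun k j a) r z
      = ∑ l ∈ range (j/2+1),
          a l * ((k + 2 * (l:ℝ)) * r ^ (k + 2 * (l:ℝ) - 1)) * z ^ (j - 2*l) := by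
  have H : HasDerivAt (fun r' : ℝ => ∑ l ∈ range (j/2+1),
      a l * r' ^ (k + 2 * (l:ℝ)) * z ^ (j - 2*l))
      (∑ l ∈ range (j/2+1),
        a l * ((k + 2 * (l:ℝ)) * r ^ (k + 2 * (l:ℝ) - 1)) * z ^ (j - 2*l)) r := by
    apply HasDerivAt.fun_sum
    intro l _
    exact ((Real.hasDerivAt_rpow_const (Or.inl hr.ne')).const_mul (a l)).mul_const _
  exact H.deriv

lemma pdr2_polyFun (k : ℝ) (j : ℕ) (a : ℕ → ℝ) (r z : ℝ) (hr : 0 < r) :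
    pdr (pdr (polyFun k j a)) r z
      = ∑ l ∈ range (j/2+1),
          a l * ((k + 2 * (l:ℝ)) * ((k + 2 * (l:ℝ) - 1) * r ^ (k + 2 * (l:ℝ) - 1 - 1)))
            * z ^ (j - 2*l) := by
  have hev : (fun r' : ℝ => pdr (polyFun k j a) r' z)
      =ᶠ[nhds r] fun r' : ℝ => ∑ l ∈ range (j/2+1),
          a l * ((k + 2 * (l:ℝ)) * r' ^ (k + 2 * (l:ℝ) - 1)) * z ^ (j - 2*l) := by
    filter_upwards [eventually_gt_nhds hr] with r' hr'
    exact pdr_polyFun k j a r' z hr'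
  show deriv (fun r' => pdr (polyFun k j a) r' z) r = _
  rw [hev.deriv_eq]
  have H : HasDerivAt (fun r' : ℝ => ∑ l ∈ range (j/2+1),
      a l * ((k + 2 * (l:ℝ)) * r' ^ (k + 2 * (l:ℝ) - 1)) * z ^ (j - 2*l))
      (∑ l ∈ range (j/2+1),
        a l * ((k + 2 * (l:ℝ)) * ((k + 2 * (l:ℝ) - 1) * r ^ (k + 2 * (l:ℝ) - 1 - 1)))
          * z ^ (j - 2*l)) r := by
    apply HasDerivAt.fun_sum
    intro l _
    exact (((Real.hasDerivAt_rpow_const (Or.inl hr.ne')).const_mul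
      (k + 2 * (l:ℝ))).const_mul (a l)).mul_const _
  exact H.deriv
lemma Lop_polyFun (n : ℕ) (k : ℝ) (j : ℕ) (a : ℕ → ℝ) (r z : ℝ) (hr : 0 < r) :
    Lop n (k * (k + (n:ℝ) - 1)) (polyFun k j a) r z
      = ∑ l ∈ range (j/2+1),
          (-(((j - 2*l : ℕ):ℝ) * ((j - 2*l - 1 : ℕ):ℝ)) * a l * r ^ (k + 2*(l:ℝ))
              * z ^ (j - 2*l - 2)
           + (-(2*(l:ℝ)*(2*k + 2*(l:ℝ) + (n:ℝ) - 1))) * a l * r ^ (k + 2*(l:ℝ) - 2)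
              * z ^ (j - 2*l)) := by
  show -pdz (pdz (polyFun k j a)) r z - pdr (pdr (polyFun k j a)) r z
      - ((n : ℝ) / r) * pdr (polyFun k j a) r z
      + (k * (k + (n:ℝ) - 1)) / r ^ 2 * (polyFun k j a) r z = _
  rw [pdz2_polyFun, pdr2_polyFun k j a r z hr, pdr_polyFun k j a r z hr]
  show _ + _ / r^2 * (∑ l ∈ range (j/2+1), a l * r ^ (k + 2*(l:ℝ)) * z ^ (j - 2*l)) = _
  rw [Finset.mul_sum, Finset.mul_sum, ← Finset.sum_neg_distrib, ← Finset.sum_sub_distrib,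
    ← Finset.sum_sub_distrib, ← Finset.sum_add_distrib]
  refine Finset.sum_congr rfl fun l _ => ?_
  have hz2 : j - 2*l - 1 - 1 = j - 2*l - 2 := by omega
  have hr2 : k + 2*(l:ℝ) - 1 - 1 = k + 2*(l:ℝ) - 2 := by ring
  have hre1 : r ^ (k + 2*(l:ℝ) - 1) = r ^ (k + 2*(l:ℝ) - 2) * r := by
    rw [show k + 2*(l:ℝ) - 1 = (k + 2*(l:ℝ) - 2) + 1 by ring, Real.rpow_add hr,
      Real.rpow_one]
  have hre : r ^ (k + 2*(l:ℝ)) = r ^ (k + 2*(l:ℝ) - 2) * r ^ (2:ℕ) := by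
    rw [← Real.rpow_natCast r 2, ← Real.rpow_add hr]
    norm_num
  rw [hz2, hr2, hre1, hre]
  have hr0 : r ≠ 0 := hr.ne'
  field_simp
  ring
/-- Coefficients of `L f` when `f = polyFun k j a`. -/
noncomputable def Lc (n : ℕ) (k : ℝ) (j : ℕ) (a : ℕ → ℝ) (l : ℕ) : ℝ :=
  -(((j - 2*l : ℕ):ℝ) * ((j - 2*l - 1 : ℕ):ℝ)) * a l
    - 2*((l:ℝ)+1)*(2*k + 2*((l:ℝ)+1) + (n:ℝ) - 1) * a (l+1)

lemma cast_mul_zero (x y : ℕ) (h : x * y = 0) : ((x:ℝ) * (y:ℝ)) = 0 := by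
  rw [← Nat.cast_mul, h, Nat.cast_zero]

lemma Lop_polyFun_eq (n : ℕ) (k : ℝ) (j : ℕ) (hj : 2 ≤ j) (a : ℕ → ℝ)
    (r z : ℝ) (hr : 0 < r) :
    Lop n (k * (k + (n:ℝ) - 1)) (polyFun k j a) r z
      = polyFun k (j-2) (Lc n k j a) r z := by
  rw [Lop_polyFun n k j a r z hr]
  set J' := (j-2)/2 with hJ'
  have hJ : j/2 + 1 = (J' + 1) + 1 := by omega
  have e1 : (∑ l ∈ range ((J'+1)+1),
        -(((j - 2*l : ℕ):ℝ) * ((j - 2*l - 1 : ℕ):ℝ)) * a l * r ^ (k + 2*(l:ℝ))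
          * z ^ (j - 2*l - 2))
      = ∑ l ∈ range (J'+1),
        -(((j - 2*l : ℕ):ℝ) * ((j - 2*l - 1 : ℕ):ℝ)) * a l * r ^ (k + 2*(l:ℝ))
          * z ^ (j - 2*l - 2) := by
    rw [Finset.sum_range_succ]
    have h0 : (j - 2*(J'+1)) * (j - 2*(J'+1) - 1) = 0 := by
      have : j - 2*(J'+1) = 0 ∨ j - 2*(J'+1) = 1 := by omega
      rcases this with h | h <;> rw [h] <;> ring
    rw [cast_mul_zero _ _ h0]
    ring
  have e2 : (∑ l ∈ range ((J'+1)+1),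
        (-(2*(l:ℝ)*(2*k + 2*(l:ℝ) + (n:ℝ) - 1))) * a l * r ^ (k + 2*(l:ℝ) - 2)
          * z ^ (j - 2*l))
      = ∑ l ∈ range (J'+1),
        (-(2*((l+1:ℕ):ℝ)*(2*k + 2*((l+1:ℕ):ℝ) + (n:ℝ) - 1))) * a (l+1)
          * r ^ (k + 2*((l+1:ℕ):ℝ) - 2) * z ^ (j - 2*(l+1)) := by
    rw [Finset.sum_range_succ']
    norm_num
  rw [Finset.sum_add_distrib, hJ, e1, e2, ← Finset.sum_add_distrib]
  unfold polyFun
  refine Finset.sum_congr rfl fun l hl => ?_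
  have hl' : l ≤ J' := by simpa [Nat.lt_succ_iff] using Finset.mem_range.mp hl
  have hz1 : j - 2*l - 2 = j - 2 - 2*l := by omega
  have hz2 : j - 2*(l+1) = j - 2 - 2*l := by omega
  have hr1 : k + 2*((l+1:ℕ):ℝ) - 2 = k + 2*(l:ℝ) := by push_cast; ring
  rw [hz1, hz2, hr1]
  unfold Lc
  push_cast
  ring

lemma Lop_polyFun_lowdeg (n : ℕ) (k : ℝ) (j : ℕ) (hj : j ≤ 1) (a : ℕ → ℝ)
    (r z : ℝ) (hr : 0 < r) :
    Lop n (k * (k + (n:ℝ) - 1)) (polyFun k j a) r z = 0 := by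
  rw [Lop_polyFun n k j a r z hr]
  have hJ : j/2 + 1 = 1 := by omega
  rw [hJ, Finset.sum_range_one]
  have h0 : (j - 2*0) * (j - 2*0 - 1) = 0 := by
    have : j - 2*0 = 0 ∨ j - 2*0 = 1 := by omega
    rcases this with h | h <;> rw [h] <;> ring
  rw [cast_mul_zero _ _ h0]
  push_cast
  ring
/-- Coefficients of the canonical kernel element of `L` in `P_{k,j}`. -/
noncomputable def hc (n : ℕ) (k : ℝ) (j : ℕ) : ℕ → ℝ
  | 0 => 1
  | l+1 => -(((j - 2*l : ℕ):ℝ) * ((j - 2*l - 1 : ℕ):ℝ))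
      / (2*((l:ℝ)+1)*(2*k + 2*((l:ℝ)+1) + (n:ℝ) - 1)) * hc n k j l

lemma den_pos (n : ℕ) (hn : 1 ≤ n) (k : ℝ) (hk : 0 ≤ k) (l : ℕ) :
    0 < 2*((l:ℝ)+1)*(2*k + 2*((l:ℝ)+1) + (n:ℝ) - 1) := by
  have h1 : (0:ℝ) < (l:ℝ) + 1 := by positivity
  have h2 : (1:ℝ) ≤ (n:ℝ) := by exact_mod_cast hn
  have h3 : (0:ℝ) < 2*k + 2*((l:ℝ)+1) + (n:ℝ) - 1 := by nlinarith
  nlinarith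

lemma Lc_hc (n : ℕ) (hn : 1 ≤ n) (k : ℝ) (hk : 0 ≤ k) (j : ℕ) (l : ℕ) :
    Lc n k j (hc n k j) l = 0 := by
  have hd := (den_pos n hn k hk l).ne'
  unfold Lc
  rw [show hc n k j (l+1) = -(((j - 2*l : ℕ):ℝ) * ((j - 2*l - 1 : ℕ):ℝ))
      / (2*((l:ℝ)+1)*(2*k + 2*((l:ℝ)+1) + (n:ℝ) - 1)) * hc n k j l from rfl]
  rw [div_mul_eq_mul_div, mul_div_assoc', mul_div_cancel_left₀ _ hd]
  ring

lemma hc_sign (n : ℕ) (hn : 1 ≤ n) (k : ℝ) (hk : 0 ≤ k) (j : ℕ) :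
    ∀ l : ℕ, 2*l ≤ j → 0 < (-1:ℝ)^l * hc n k j l := by
  intro l
  induction l with
  | zero => intro _; norm_num [hc]
  | succ m ih =>
    intro hm
    have hm' : 2*m ≤ j := by omega
    have hpos := ih hm'
    have hd := den_pos n hn k hk m
    have h2 : 2 ≤ j - 2*m := by omega
    have hnum : (0:ℝ) < ((j - 2*m : ℕ):ℝ) * ((j - 2*m - 1 : ℕ):ℝ) := by
      have a1 : (2:ℝ) ≤ ((j - 2*m : ℕ):ℝ) := by exact_mod_cast h2
      have a2 : (1:ℝ) ≤ ((j - 2*m - 1 : ℕ):ℝ) := by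
        have : 1 ≤ j - 2*m - 1 := by omega
        exact_mod_cast this
      nlinarith
    have : (-1:ℝ)^(m+1) * hc n k j (m+1)
        = (((j - 2*m : ℕ):ℝ) * ((j - 2*m - 1 : ℕ):ℝ))
          / (2*((m:ℝ)+1)*(2*k + 2*((m:ℝ)+1) + (n:ℝ) - 1)) * ((-1:ℝ)^m * hc n k j m) := by
      rw [show hc n k j (m+1) = -(((j - 2*m : ℕ):ℝ) * ((j - 2*m - 1 : ℕ):ℝ))
        / (2*((m:ℝ)+1)*(2*k + 2*((m:ℝ)+1) + (n:ℝ) - 1)) * hc n k j m from rfl]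
      ring
    rw [this]
    positivity

lemma hc_ne (n : ℕ) (hn : 1 ≤ n) (k : ℝ) (hk : 0 ≤ k) (j : ℕ) (l : ℕ) (hl : 2*l ≤ j) :
    hc n k j l ≠ 0 := by
  have := hc_sign n hn k hk j l hl
  intro h
  rw [h, mul_zero] at this
  exact lt_irrefl _ this

/-- Linear independence: if a `polyFun` vanishes at `r = 1` for all `z`, its
coefficients vanish. -/
lemma polyFun_coeff_zero (k : ℝ) (j : ℕ) (a : ℕ → ℝ)
    (H : ∀ z : ℝ, polyFun k j a 1 z = 0) :
    ∀ l ∈ range (j/2+1), a l = 0 := by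
  set P : Polynomial ℝ := ∑ l ∈ range (j/2+1), Polynomial.C (a l) * Polynomial.X ^ (j - 2*l)
    with hP
  have hP0 : P = 0 := by
    apply Polynomial.funext
    intro z
    have := H z
    simp only [polyFun, Real.one_rpow, mul_one] at this
    simp [hP, Polynomial.eval_finset_sum, this]
  intro l hl
  have hcoeff := congrArg (fun Q => Polynomial.coeff Q (j - 2*l)) hP0
  simp only [hP, Polynomial.finset_sum_coeff, Polynomial.coeff_C_mul,
    Polynomial.coeff_X_pow, Polynomial.coeff_zero, mul_ite, mul_one, mul_zero] at hcoeff
  rw [Finset.sum_eq_single l (fun i hi hne => ?_) (fun h => absurd hl h)] at hcoeff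
  · simpa using hcoeff
  · have hi' : i ≤ j/2 := by simpa [Nat.lt_succ_iff] using Finset.mem_range.mp hi
    have hl' : l ≤ j/2 := by simpa [Nat.lt_succ_iff] using Finset.mem_range.mp hl
    have : j - 2*l ≠ j - 2*i := by omega
    simp [this]
lemma ker_coeffs (n : ℕ) (hn : 1 ≤ n) (k : ℝ) (hk : 0 ≤ k) (j : ℕ) (b : ℕ → ℝ)
    (hb : ∀ r : ℝ, 0 < r → ∀ z : ℝ, Lop n (k*(k+(n:ℝ)-1)) (polyFun k j b) r z = 0) :
    ∀ l, l ≤ j/2 → b l = b 0 * hc n k j l := by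
  by_cases hj : 2 ≤ j
  · have hLc : ∀ l ∈ range ((j-2)/2+1), Lc n k j b l = 0 := by
      apply polyFun_coeff_zero
      intro z
      rw [← Lop_polyFun_eq n k j hj b 1 z one_pos]
      exact hb 1 one_pos z
    intro l
    induction l with
    | zero => intro _; simp [hc]
    | succ m ih =>
      intro hm
      have hm' : m ≤ j/2 := by omega
      have hmem : m ∈ range ((j-2)/2+1) := by
        rw [Finset.mem_range]; omega
      have h0 := hLc m hmem
      unfold Lc at h0
      have hd := (den_pos n hn k hk m).ne'
      rw [ih hm'] at h0
      rw [show hc n k j (m+1) = -(((j - 2*m : ℕ):ℝ) * ((j - 2*m - 1 : ℕ):ℝ))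
        / (2*((m:ℝ)+1)*(2*k + 2*((m:ℝ)+1) + (n:ℝ) - 1)) * hc n k j m from rfl]
      rw [eq_comm, div_mul_eq_mul_div, mul_div_assoc', div_eq_iff hd]
      linear_combination h0
  · intro l hl
    have hl0 : l = 0 := by omega
    subst hl0; simp [hc]

lemma alt_sum (t b : ℕ → ℝ) (L : ℕ) (h0 : b 0 = t 0)
    (hs : ∀ l, l + 1 < L → b (l+1) = t (l+1) - b l) :
    ∀ l, l < L → b l = ∑ i ∈ range (l+1), (-1:ℝ)^(l-i) * t i := by
  intro l
  induction l with
  | zero => intro _; simp [h0]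
  | succ m ih =>
    intro hm
    rw [hs m hm, ih (by omega)]
    conv_rhs => rw [Finset.sum_range_succ]
    have he : ∀ i ∈ range (m+1), (-1:ℝ)^(m+1-i) * t i = -((-1:ℝ)^(m-i) * t i) := by
      intro i hi
      have hi' : i ≤ m := by simpa [Nat.lt_succ_iff] using Finset.mem_range.mp hi
      rw [show m+1-i = (m-i)+1 by omega, pow_succ]
      ring
    rw [Finset.sum_congr rfl he, Finset.sum_neg_distrib]
    simp only [Nat.sub_self, pow_zero, one_mul]
    ring

/-- The coefficients of `(r²+z²)·p` where `p` has coefficients `b`. -/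
noncomputable def Mc (J : ℕ) (b : ℕ → ℝ) (l : ℕ) : ℝ :=
  (if l = 0 then 0 else b (l-1)) + (if l = J then 0 else b l)

lemma rpow_add_two (r : ℝ) (hr : 0 < r) (x : ℝ) : r ^ (x + 2) = r ^ x * r ^ (2:ℕ) := by
  rw [← Real.rpow_natCast r 2, ← Real.rpow_add hr]
  norm_num

lemma mul_polyFun (k : ℝ) (j : ℕ) (hj : 2 ≤ j) (b : ℕ → ℝ) (r z : ℝ) (hr : 0 < r) :
    (r^2 + z^2) * polyFun k (j-2) b r z
      = ∑ l ∈ range (j/2+1), Mc (j/2) b l * r ^ (k + 2*(l:ℝ)) * z ^ (j - 2*l) := by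
  unfold polyFun Mc
  rw [add_mul, Finset.mul_sum, Finset.mul_sum]
  have e1 : ∑ l ∈ range (j/2+1), ((if l = 0 then (0:ℝ) else b (l-1))
          + (if l = j/2 then 0 else b l)) * r ^ (k + 2*(l:ℝ)) * z ^ (j - 2*l)
      = (∑ l ∈ range (j/2+1),
            (if l = 0 then (0:ℝ) else b (l-1)) * r ^ (k + 2*(l:ℝ)) * z ^ (j - 2*l))
        + ∑ l ∈ range (j/2+1),
            (if l = j/2 then (0:ℝ) else b l) * r ^ (k + 2*(l:ℝ)) * z ^ (j - 2*l) := by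
    rw [← Finset.sum_add_distrib]
    exact Finset.sum_congr rfl fun l _ => by ring
  rw [e1, show (j-2)/2+1 = j/2 by omega]
  congr 1
  · rw [Finset.sum_range_succ']
    have hf0 : (if (0:ℕ) = 0 then (0:ℝ) else b (0-1)) * r ^ (k + 2*((0:ℕ):ℝ))
        * z ^ (j - 2*0) = 0 := by norm_num
    rw [hf0, add_zero]
    refine Finset.sum_congr rfl fun l hl => ?_
    rw [if_neg (Nat.succ_ne_zero l)]
    simp only [Nat.add_sub_cancel]
    have hl' : l < j/2 := Finset.mem_range.mp hl
    rw [show j - 2*(l+1) = j - 2 - 2*l by omega]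
    push_cast
    rw [show k + 2*((l:ℝ)+1) = (k + 2*(l:ℝ)) + 2 by ring, rpow_add_two r hr]
    ring
  · rw [Finset.sum_range_succ]
    have ht : (if j/2 = j/2 then (0:ℝ) else b (j/2)) = 0 := if_pos rfl
    rw [ht, zero_mul, zero_mul, add_zero]
    refine Finset.sum_congr rfl fun l hl => ?_
    have hl' : l < j/2 := Finset.mem_range.mp hl
    rw [if_neg (Nat.lt_iff_le_and_ne.mp hl').2,
      show j - 2*l = (j - 2 - 2*l) + 2 by omega, pow_add]
    ring

lemma Dsum_ne (n : ℕ) (hn : 1 ≤ n) (k : ℝ) (hk : 0 ≤ k) (j : ℕ) :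
    ∑ i ∈ range (j/2+1), (-1:ℝ)^(j/2 - i) * hc n k j i ≠ 0 := by
  intro hS
  have he : ∀ i ∈ range (j/2+1), (-1:ℝ)^i * hc n k j i
      = (-1:ℝ)^(j/2) * ((-1:ℝ)^(j/2-i) * hc n k j i) := by
    intro i hi
    have hi' : i ≤ j/2 := by simpa [Nat.lt_succ_iff] using Finset.mem_range.mp hi
    rw [← mul_assoc, ← pow_add, show j/2 + (j/2 - i) = 2*(j/2-i) + i by omega,
      pow_add, pow_mul]
    norm_num
  have hpos : 0 < ∑ i ∈ range (j/2+1), (-1:ℝ)^i * hc n k j i := by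
    apply Finset.sum_pos
    · intro i hi
      have hi' : i ≤ j/2 := by simpa [Nat.lt_succ_iff] using Finset.mem_range.mp hi
      exact hc_sign n hn k hk j i (by omega)
    · exact ⟨0, Finset.mem_range.mpr (by omega)⟩
  rw [Finset.sum_congr rfl he, ← Finset.mul_sum, hS, mul_zero] at hpos
  exact lt_irrefl _ hpos
lemma Mc_zero (J : ℕ) (b : ℕ → ℝ) (hJ : 1 ≤ J) : Mc J b 0 = b 0 := by
  unfold Mc
  rw [if_pos rfl, if_neg (by omega), zero_add]

lemma Mc_mid (J : ℕ) (b : ℕ → ℝ) (l : ℕ) (h1 : 0 < l) (h2 : l < J) :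
    Mc J b l = b (l-1) + b l := by
  unfold Mc
  rw [if_neg (by omega), if_neg (by omega)]

lemma Mc_top (J : ℕ) (b : ℕ → ℝ) (hJ : 1 ≤ J) : Mc J b J = b (J-1) := by
  unfold Mc
  rw [if_neg (by omega), if_pos rfl, add_zero]

lemma alt_split (t : ℕ → ℝ) (J : ℕ) (hJ : 1 ≤ J) :
    ∑ i ∈ range (J+1), (-1:ℝ)^(J-i) * t i
      = t J - ∑ i ∈ range J, (-1:ℝ)^(J-1-i) * t i := by
  rw [Finset.sum_range_succ, Nat.sub_self, pow_zero, one_mul]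
  have he : ∀ i ∈ range J, (-1:ℝ)^(J-i) * t i = -((-1:ℝ)^(J-1-i) * t i) := by
    intro i hi
    have : i < J := Finset.mem_range.mp hi
    rw [show J - i = (J-1-i)+1 by omega, pow_succ]
    ring
  rw [Finset.sum_congr rfl he, Finset.sum_neg_distrib]
  ring

lemma decomp_exists (n : ℕ) (hn : 1 ≤ n) (k : ℝ) (hk : 0 ≤ k) (j : ℕ) (hj : 2 ≤ j)
    (a : ℕ → ℝ) :
    ∃ c : ℝ, ∃ b : ℕ → ℝ, ∀ l ∈ range (j/2+1),
      a l = c * hc n k j l + Mc (j/2) b l := by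
  have hJ : 1 ≤ j/2 := by omega
  have hDne := Dsum_ne n hn k hk j
  set D := ∑ i ∈ range (j/2+1), (-1:ℝ)^(j/2-i) * hc n k j i with hD
  set c := (∑ i ∈ range (j/2+1), (-1:ℝ)^(j/2-i) * a i) / D with hcdef
  set t : ℕ → ℝ := fun l => a l - c * hc n k j l with htdef
  set b : ℕ → ℝ := fun l => Nat.rec (t 0) (fun m bm => t (m+1) - bm) l with hbdef
  have h0 : b 0 = t 0 := rfl
  have hs : ∀ l, b (l+1) = t (l+1) - b l := fun l => rfl
  refine ⟨c, b, fun l hl => ?_⟩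
  have hl' : l ≤ j/2 := by simpa [Nat.lt_succ_iff] using Finset.mem_range.mp hl
  rcases Nat.eq_zero_or_pos l with hl0 | hlpos
  · subst hl0
    rw [Mc_zero _ _ hJ, h0]
    simp only [htdef]
    ring
  · rcases eq_or_lt_of_le hl' with hlJ | hlJ
    · subst hlJ
      rw [Mc_top _ _ hJ]
      have hbJ := alt_sum t b (j/2) h0 (fun l _ => hs l) (j/2-1) (by omega)
      rw [show j/2-1+1 = j/2 by omega] at hbJ
      have hsum : ∑ i ∈ range (j/2+1), (-1:ℝ)^(j/2-i) * t i = 0 := by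
        have hsplit : ∑ i ∈ range (j/2+1), (-1:ℝ)^(j/2-i) * t i
            = (∑ i ∈ range (j/2+1), (-1:ℝ)^(j/2-i) * a i) - c * D := by
          rw [hD, Finset.mul_sum, ← Finset.sum_sub_distrib]
          refine Finset.sum_congr rfl fun i _ => ?_
          simp only [htdef]
          ring
        rw [hsplit, hcdef, div_mul_cancel₀ _ hDne, sub_self]
      rw [alt_split t (j/2) hJ, ← hbJ] at hsum
      have ht' : t (j/2) = a (j/2) - c * hc n k j (j/2) := rfl
      rw [ht'] at hsum
      linarith
    · rw [Mc_mid _ _ _ hlpos hlJ]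
      have h2 := hs (l-1)
      rw [show l-1+1 = l by omega] at h2
      rw [h2]
      have ht' : t l = a l - c * hc n k j l := rfl
      rw [ht']
      ring

lemma decomp_unique (n : ℕ) (hn : 1 ≤ n) (k : ℝ) (hk : 0 ≤ k) (j : ℕ) (hj : 2 ≤ j)
    (c : ℝ) (b : ℕ → ℝ)
    (h : ∀ l ∈ range (j/2+1), c * hc n k j l + Mc (j/2) b l = 0) :
    c = 0 ∧ ∀ l, l < j/2 → b l = 0 := by
  have hJ : 1 ≤ j/2 := by omega
  set t : ℕ → ℝ := fun l => -c * hc n k j l with htdef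
  have h0 : b 0 = t 0 := by
    have h00 := h 0 (Finset.mem_range.mpr (by omega))
    rw [Mc_zero _ _ hJ] at h00
    have ht' : t 0 = -c * hc n k j 0 := rfl
    rw [ht']
    linarith
  have hs : ∀ l, l + 1 < j/2 → b (l+1) = t (l+1) - b l := by
    intro l hl
    have hE := h (l+1) (Finset.mem_range.mpr (by omega))
    rw [Mc_mid _ _ _ (by omega) (by omega)] at hE
    simp only [Nat.add_sub_cancel] at hE
    have ht' : t (l+1) = -c * hc n k j (l+1) := rfl
    rw [ht']
    linarith
  have hbJ := alt_sum t b (j/2) h0 hs (j/2-1) (by omega)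
  rw [show j/2-1+1 = j/2 by omega] at hbJ
  have hEJ := h (j/2) (Finset.mem_range.mpr (by omega))
  rw [Mc_top _ _ hJ] at hEJ
  have hsum : ∑ i ∈ range (j/2+1), (-1:ℝ)^(j/2-i) * t i = 0 := by
    rw [alt_split t (j/2) hJ, ← hbJ]
    have ht' : t (j/2) = -c * hc n k j (j/2) := rfl
    rw [ht']
    linarith
  have hfac : ∑ i ∈ range (j/2+1), (-1:ℝ)^(j/2-i) * t i
      = -c * ∑ i ∈ range (j/2+1), (-1:ℝ)^(j/2-i) * hc n k j i := by
    rw [Finset.mul_sum]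
    refine Finset.sum_congr rfl fun i _ => ?_
    have ht' : t i = -c * hc n k j i := rfl
    rw [ht']
    ring
  rw [hfac] at hsum
  have hc0 : c = 0 := by
    rcases mul_eq_zero.mp hsum with h1 | h2
    · linarith
    · exact absurd h2 (Dsum_ne n hn k hk j)
  refine ⟨hc0, fun l hl => ?_⟩
  rw [alt_sum t b (j/2) h0 hs l hl]
  apply Finset.sum_eq_zero
  intro i _
  have ht' : t i = -c * hc n k j i := rfl
  rw [ht', hc0]
  ring

lemma Mc_sub (J : ℕ) (b' b : ℕ → ℝ) (l : ℕ) :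
    Mc J (fun i => b' i - b i) l = Mc J b' l - Mc J b l := by
  unfold Mc
  split_ifs <;> ring

/-- Structure of the spaces `P_{k,j}` under the operator `L`:
(i) `L` maps `P_{k,j}` into `P_{k,j-2}` (as functions on `(0,∞) × ℝ`);
(ii) `H_{k,j} = P_{k,j} ∩ ker L` is one-dimensional;
(iii) `P_{k,j} = H_{k,j} ⊕ (r²+z²)·P_{k,j-2}`. -/
theorem Pspace_structure (n : ℕ) (hn : 1 ≤ n) (k : ℝ) (hk : 0 ≤ k) (lam : ℝ)
    (hlam : lam = k * (k + (n : ℝ) - 1)) :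
    -- (i)
    (∀ j : ℕ, 2 ≤ j → ∀ f ∈ Pspace k j, ∃ g ∈ Pspace k (j - 2),
      ∀ r : ℝ, 0 < r → ∀ z : ℝ, Lop n lam f r z = g r z)
    -- (ii)
    ∧ (∀ j : ℕ, ∃ h ∈ Pspace k j,
        (∀ r : ℝ, 0 < r → ∀ z : ℝ, Lop n lam h r z = 0)
        ∧ (∃ r : ℝ, 0 < r ∧ ∃ z : ℝ, h r z ≠ 0)
        ∧ ∀ g ∈ Pspace k j, (∀ r : ℝ, 0 < r → ∀ z : ℝ, Lop n lam g r z = 0) →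
            ∃ c : ℝ, ∀ r : ℝ, 0 < r → ∀ z : ℝ, g r z = c * h r z)
    -- (iii)
    ∧ (∀ j : ℕ, 2 ≤ j → ∀ f ∈ Pspace k j,
        ∃ h ∈ Pspace k j, ∃ p ∈ Pspace k (j - 2),
          (∀ r : ℝ, 0 < r → ∀ z : ℝ, Lop n lam h r z = 0)
          ∧ (∀ r : ℝ, 0 < r → ∀ z : ℝ, f r z = h r z + (r ^ 2 + z ^ 2) * p r z)
          ∧ ∀ h' ∈ Pspace k j, ∀ p' ∈ Pspace k (j - 2),
              (∀ r : ℝ, 0 < r → ∀ z : ℝ, Lop n lam h' r z = 0) →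
              (∀ r : ℝ, 0 < r → ∀ z : ℝ, f r z = h' r z + (r ^ 2 + z ^ 2) * p' r z) →
              ∀ r : ℝ, 0 < r → ∀ z : ℝ, h' r z = h r z ∧ p' r z = p r z) := by
  subst hlam
  refine ⟨?_, ?_, ?_⟩
  -- (i)
  · intro j hj f hf
    obtain ⟨a, rfl⟩ := hf
    exact ⟨polyFun k (j-2) (Lc n k j a), ⟨Lc n k j a, rfl⟩,
      fun r hr z => Lop_polyFun_eq n k j hj a r z hr⟩
  -- (ii)
  · intro j
    refine ⟨polyFun k j (hc n k j), ⟨hc n k j, rfl⟩, ?_, ?_, ?_⟩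
    · intro r hr z
      by_cases hj : 2 ≤ j
      · rw [Lop_polyFun_eq n k j hj _ r z hr]
        unfold polyFun
        apply Finset.sum_eq_zero
        intro l _
        rw [Lc_hc n hn k hk j l, zero_mul, zero_mul]
      · exact Lop_polyFun_lowdeg n k j (by omega) _ r z hr
    · refine ⟨1, one_pos, ?_⟩
      by_contra hzero
      push_neg at hzero
      have h0 := polyFun_coeff_zero k j (hc n k j) hzero 0
        (Finset.mem_range.mpr (by omega))
      rw [show hc n k j 0 = 1 from rfl] at h0
      exact one_ne_zero h0
    · intro g hg hker
      obtain ⟨b, rfl⟩ := hg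
      have hco := ker_coeffs n hn k hk j b hker
      refine ⟨b 0, fun r hr z => ?_⟩
      unfold polyFun
      rw [Finset.mul_sum]
      refine Finset.sum_congr rfl fun l hl => ?_
      have hl' : l ≤ j/2 := by simpa [Nat.lt_succ_iff] using Finset.mem_range.mp hl
      rw [hco l hl']
      ring
  -- (iii)
  · intro j hj f hf
    obtain ⟨a, rfl⟩ := hf
    obtain ⟨c, b, hab⟩ := decomp_exists n hn k hk j hj a
    have hdecomp : ∀ r : ℝ, 0 < r → ∀ z : ℝ, polyFun k j a r z
        = polyFun k j (fun l => c * hc n k j l) r z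
          + (r^2 + z^2) * polyFun k (j-2) b r z := by
      intro r hr z
      rw [mul_polyFun k j hj b r z hr]
      unfold polyFun
      rw [← Finset.sum_add_distrib]
      refine Finset.sum_congr rfl fun l hl => ?_
      rw [hab l hl]
      ring
    refine ⟨polyFun k j (fun l => c * hc n k j l), ⟨_, rfl⟩,
      polyFun k (j-2) b, ⟨b, rfl⟩, ?_, hdecomp, ?_⟩
    · intro r hr z
      rw [Lop_polyFun_eq n k j hj _ r z hr]
      unfold polyFun
      apply Finset.sum_eq_zero
      intro l _
      have hlin : Lc n k j (fun l => c * hc n k j l) l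
          = c * Lc n k j (hc n k j) l := by
        unfold Lc
        ring
      rw [hlin, Lc_hc n hn k hk j l, mul_zero, zero_mul, zero_mul]
    · intro h' hh' p' hp' hker' heq'
      obtain ⟨a', rfl⟩ := hh'
      obtain ⟨b', rfl⟩ := hp'
      have hco' := ker_coeffs n hn k hk j a' hker'
      have h'eq : ∀ r z : ℝ, polyFun k j a' r z
          = polyFun k j (fun l => a' 0 * hc n k j l) r z := by
        intro r z
        unfold polyFun
        refine Finset.sum_congr rfl fun l hl => ?_
        have hl' : l ≤ j/2 := by simpa [Nat.lt_succ_iff] using Finset.mem_range.mp hl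
        rw [hco' l hl']
      have hpt : ∀ z : ℝ, polyFun k j
          (fun l => (a' 0 - c) * hc n k j l + Mc (j/2) (fun i => b' i - b i) l) 1 z
            = 0 := by
        intro z
        have e1 := heq' 1 one_pos z
        have e2 := hdecomp 1 one_pos z
        have e5 := h'eq 1 z
        have hT : polyFun k j
            (fun l => (a' 0 - c) * hc n k j l + Mc (j/2) (fun i => b' i - b i) l) 1 z
          = (polyFun k j (fun l => a' 0 * hc n k j l) 1 z
              - polyFun k j (fun l => c * hc n k j l) 1 z)
            + ((∑ l ∈ range (j/2+1),
                  Mc (j/2) b' l * (1:ℝ) ^ (k + 2*(l:ℝ)) * z ^ (j - 2*l))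
               - ∑ l ∈ range (j/2+1),
                  Mc (j/2) b l * (1:ℝ) ^ (k + 2*(l:ℝ)) * z ^ (j - 2*l)) := by
          unfold polyFun
          rw [← Finset.sum_sub_distrib, ← Finset.sum_sub_distrib,
            ← Finset.sum_add_distrib]
          refine Finset.sum_congr rfl fun l _ => ?_
          beta_reduce
          rw [Mc_sub]
          ring
        rw [← mul_polyFun k j hj b' 1 z one_pos,
          ← mul_polyFun k j hj b 1 z one_pos] at hT
        rw [hT]
        linarith
      have key := polyFun_coeff_zero k j _ hpt
      obtain ⟨hcc, hbb⟩ := decomp_unique n hn k hk j hj (a' 0 - c)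
        (fun i => b' i - b i) key
      intro r hr z
      constructor
      · rw [h'eq r z]
        unfold polyFun
        refine Finset.sum_congr rfl fun l _ => ?_
        rw [show a' 0 = c by linarith]
      · unfold polyFun
        refine Finset.sum_congr rfl fun l hl => ?_
        have hl' : l ≤ (j-2)/2 := by simpa [Nat.lt_succ_iff] using Finset.mem_range.mp hl
        have hlJ : l < j/2 := by omega
        have := hbb l hlJ
        rw [show b' l = b l by linarith]
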